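/- Let ℓ ≥ 1 and let x : {1,...,3ℓ} → {0,1}. Define u := Σ_{j=0}^{ℓ−1} (2·x_{3j+1}' + x_{3j+2}')·8^j and v := Σ_{j=0}^{ℓ−1} x_{3j+3}'·8^j, where x'_m denotes the bit of x in the j-th block (blocks indexed from the least significant end). Then for every j with 0 ≤ j ≤ ℓ−1, the bit of value 4·8^j in u + v (i.e., ⌊(u+v)/(4·8^j)⌋ mod 2) equals x'_{3j+1} ∧ x'_{3j+2} ∧ x'_{3j+3}. -/
import Mathlib

private lemma sum_lt_pow (d : ℕ → ℕ) (hd : ∀ i, d i < 8) (n : ℕ) :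
    (∑ i ∈ Finset.range n, d i * 8 ^ i) < 8 ^ n := by
  induction n with
  | zero => simp
  | succ n ih =>
    rw [Finset.sum_range_succ, pow_succ]
    have h7 : d n * 8 ^ n ≤ 7 * 8 ^ n := Nat.mul_le_mul_right _ (by have := hd n; omega)
    linarith

private lemma digit_split (d : ℕ → ℕ) (ℓ j : ℕ) (hj : j < ℓ) :
    (∑ i ∈ Finset.range ℓ, d i * 8 ^ i) =
      (∑ i ∈ Finset.range j, d i * 8 ^ i) +
        (d j + 8 * ∑ i ∈ Finset.range (ℓ - (j+1)), d (j+1+i) * 8 ^ i) * 8 ^ j := by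
  rw [← Finset.sum_range_add_sum_Ico _ (le_of_lt hj), Finset.sum_Ico_eq_sum_range,
    show ℓ - j = (ℓ - (j+1)) + 1 by omega, Finset.sum_range_succ']
  have hsum : (∑ i ∈ Finset.range (ℓ - (j+1)), d (j + (i+1)) * 8 ^ (j + (i+1)))
      = (∑ i ∈ Finset.range (ℓ - (j+1)), d (j+1+i) * 8 ^ i) * (8 * 8 ^ j) := by
    rw [Finset.sum_mul]
    refine Finset.sum_congr rfl fun i _ => ?_
    rw [show j + (i+1) = j+1+i by ring, show j+1+i = i + (j+1) by ring, pow_add, pow_succ]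
    ring
  rw [hsum, add_zero]
  ring

private lemma digit_extract (d : ℕ → ℕ) (hd : ∀ i, d i < 8) (ℓ j : ℕ) (hj : j < ℓ) :
    (∑ i ∈ Finset.range ℓ, d i * 8 ^ i) / (4 * 8 ^ j) % 2 = d j / 4 % 2 := by
  rw [digit_split d ℓ j hj]
  set B := ∑ i ∈ Finset.range (ℓ - (j+1)), d (j+1+i) * 8 ^ i with hB
  have hA : (∑ i ∈ Finset.range j, d i * 8 ^ i) < 8 ^ j := sum_lt_pow d hd j
  have hpos : 0 < (8:ℕ) ^ j := pow_pos (by norm_num) j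
  rw [show (4:ℕ) * 8 ^ j = 8 ^ j * 4 by ring, ← Nat.div_div_eq_div_mul,
    Nat.add_mul_div_right _ _ hpos, Nat.div_eq_of_lt hA, zero_add,
    show d j + 8 * B = d j + (2 * B) * 4 by ring,
    Nat.add_mul_div_right _ _ (by norm_num : (0:ℕ) < 4)]
  omega

theorem stmt_12 (ℓ : ℕ) (hℓ : 1 ≤ ℓ) (x : ℕ → ℕ) (hx : ∀ m, x m ≤ 1) :
    ∀ j < ℓ,
      ((∑ i ∈ Finset.range ℓ, (2 * x (3 * i + 1) + x (3 * i + 2)) * 8 ^ i) +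
        (∑ i ∈ Finset.range ℓ, x (3 * i + 3) * 8 ^ i)) / (4 * 8 ^ j) % 2
        = x (3 * j + 1) * x (3 * j + 2) * x (3 * j + 3) := by
  intro j hj
  set d : ℕ → ℕ := fun i => 2 * x (3 * i + 1) + x (3 * i + 2) + x (3 * i + 3) with hd
  have hcomb : ((∑ i ∈ Finset.range ℓ, (2 * x (3 * i + 1) + x (3 * i + 2)) * 8 ^ i) +
      (∑ i ∈ Finset.range ℓ, x (3 * i + 3) * 8 ^ i))
      = ∑ i ∈ Finset.range ℓ, d i * 8 ^ i := by
    rw [← Finset.sum_add_distrib]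
    exact Finset.sum_congr rfl fun i _ => by simp [hd]; ring
  have hdlt : ∀ i, d i < 8 := by
    intro i
    have h1 := hx (3 * i + 1); have h2 := hx (3 * i + 2); have h3 := hx (3 * i + 3)
    simp only [hd]; omega
  rw [hcomb, digit_extract d hdlt ℓ j hj]
  have h1 := hx (3 * j + 1); have h2 := hx (3 * j + 2); have h3 := hx (3 * j + 3)
  simp only [hd]
  interval_cases (x (3 * j + 1)) <;> interval_cases (x (3 * j + 2)) <;>
    interval_cases (x (3 * j + 3)) <;> rfl
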